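/- Assume the ultracontractive bound. Let 0 < α < β, let 1 ≤ p < β/α, and set q = pβ/(β − pα). There exists a constant C > 0, depending only on p, α, β and C₀, such that every f ∈ B^{p,α}(X) satisfies the weak-type Sobolev inequality sup_{s>0} s · μ({x ∈ X : |f(x)| ≥ s})^{1/q} ≤ C · ‖f‖_{p,α}. -/

import Mathlib

open MeasureTheory ENNReal Metric Filter

noncomputable section

namespace BesovDirichlet

variable {X : Type*} [MeasurableSpace X]

/-- A heat kernel on a measure space: jointly measurable, nonnegative, symmetric,
satisfying the semigroup property and conservative. -/
structure IsHeatKernel (μ : Measure X) (K : ℝ → X → X → ℝ) : Prop where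
  measurable : ∀ t : ℝ, Measurable fun xy : X × X => K t xy.1 xy.2
  nonneg : ∀ (t : ℝ) (x y : X), 0 ≤ K t x y
  symm : ∀ (t : ℝ) (x y : X), K t x y = K t y x
  semigroup : ∀ s t : ℝ, 0 < s → 0 < t →
    ∀ᵐ xy ∂(μ.prod μ), (∫ z, K t xy.1 z * K s z xy.2 ∂μ) = K (t + s) xy.1 xy.2
  conservative : ∀ t : ℝ, 0 < t → ∀ᵐ x ∂μ, (∫ y, K t x y ∂μ) = 1

/-- The heat semigroup `P_t f (x) = ∫ p_t(x,y) f(y) dμ(y)`. -/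
def heatOp (μ : Measure X) (K : ℝ → X → X → ℝ) (t : ℝ) (f : X → ℝ) (x : X) : ℝ :=
  ∫ y, K t x y * f y ∂μ

/-- The double integral `∫∫ |f(x) − f(y)|^p p_t(x,y) dμ(x) dμ(y)` as an extended real. -/
def besovEnergy (μ : Measure X) (K : ℝ → X → X → ℝ) (p t : ℝ) (f : X → ℝ) : ℝ≥0∞ :=
  ∫⁻ x, (∫⁻ y, ENNReal.ofReal (|f x - f y| ^ p) * ENNReal.ofReal (K t x y) ∂μ) ∂μ

/-- The heat-semigroup Besov seminorm `‖f‖_{p,α}`. -/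
def besovSeminorm (μ : Measure X) (K : ℝ → X → X → ℝ) (p α : ℝ) (f : X → ℝ) : ℝ≥0∞ :=
  ⨆ (t : ℝ) (_ : 0 < t), ENNReal.ofReal (t ^ (-α)) * besovEnergy μ K p t f ^ (1 / p)

/-- Membership in the Besov space `B^{p,α}(X)`. -/
def MemBesov (μ : Measure X) (K : ℝ → X → X → ℝ) (p α : ℝ) (f : X → ℝ) : Prop :=
  MemLp f (ENNReal.ofReal p) μ ∧ besovSeminorm μ K p α f ≠ ∞

/-- Ultracontractive bound `p_t(x,y) ≤ C₀ t^{−β}`. -/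
def Ultracontractive (μ : Measure X) (K : ℝ → X → X → ℝ) (C₀ β : ℝ) : Prop :=
  ∀ t : ℝ, 0 < t → ∀ᵐ xy ∂(μ.prod μ), K t xy.1 xy.2 ≤ C₀ * t ^ (-β)

section Aux

variable {μ : Measure X} {K : ℝ → X → X → ℝ} {p α β C₀ t s : ℝ} {f g : X → ℝ}

lemma IsHeatKernel.meas_left (hK : IsHeatKernel μ K) (t : ℝ) (x : X) :
    Measurable fun y => K t x y :=
  (hK.measurable t).comp measurable_prodMk_left

/-- a.e. every `x`: `K t x ·` is integrable, with integral 1 and lintegral 1. -/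
lemma cons_lintegral (hK : IsHeatKernel μ K) (ht : 0 < t) :
    ∀ᵐ x ∂μ, Integrable (fun y => K t x y) μ ∧ (∫ y, K t x y ∂μ) = 1 ∧
      ∫⁻ y, ENNReal.ofReal (K t x y) ∂μ = 1 := by
  filter_upwards [hK.conservative t ht] with x hx
  have hint : Integrable (fun y => K t x y) μ := by
    by_contra h
    rw [integral_undef h] at hx
    norm_num at hx
  refine ⟨hint, hx, ?_⟩
  rw [← ofReal_integral_eq_lintegral_ofReal hint (ae_of_all _ fun y => hK.nonneg t x y), hx,
    ENNReal.ofReal_one]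

lemma cons_lintegral_right (hK : IsHeatKernel μ K) (ht : 0 < t) :
    ∀ᵐ y ∂μ, ∫⁻ x, ENNReal.ofReal (K t x y) ∂μ = 1 := by
  filter_upwards [cons_lintegral hK ht] with y hy
  have : (fun x => ENNReal.ofReal (K t x y)) = fun x => ENNReal.ofReal (K t y x) := by
    funext x; rw [hK.symm t x y]
  rw [this]
  exact hy.2.2

/-- Jensen-type inequality for a probability kernel weight. -/
lemma lintegral_mul_kernel_le (hp : 1 ≤ p) {k h : X → ℝ≥0∞}
    (hh : AEMeasurable h μ) (hk : AEMeasurable k μ) (hk_top : ∀ y, k y ≠ ∞)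
    (hk1 : ∫⁻ y, k y ∂μ = 1) :
    ∫⁻ y, h y * k y ∂μ ≤ (∫⁻ y, h y ^ p * k y ∂μ) ^ (1 / p) := by
  rcases eq_or_lt_of_le hp with h1 | h1
  · simp [← h1]
  · have hpq : p.HolderConjugate (Real.conjExponent p) :=
      Real.HolderConjugate.conjExponent h1
    set q := Real.conjExponent p with hq
    have hsum : 1 / p + 1 / q = 1 := by
      rw [one_div, one_div]; exact hpq.inv_add_inv_eq_one
    have hkey : ∀ y, h y * k y = (h y * k y ^ (1 / p)) * k y ^ (1 / q) := by
      intro y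
      rcases eq_or_ne (k y) 0 with h0 | h0
      · rw [h0, ENNReal.zero_rpow_of_pos (by positivity),
          ENNReal.zero_rpow_of_pos (one_div_pos.2 hpq.symm.pos)]
        simp
      · conv_rhs => rw [mul_assoc, ← ENNReal.rpow_add _ _ h0 (hk_top y)]
        rw [hsum, ENNReal.rpow_one]
    calc ∫⁻ y, h y * k y ∂μ
        = ∫⁻ y, ((fun y => h y * k y ^ (1 / p)) * fun y => k y ^ (1 / q)) y ∂μ := by
          simp only [Pi.mul_apply]; exact lintegral_congr hkey
      _ ≤ (∫⁻ y, (h y * k y ^ (1 / p)) ^ p ∂μ) ^ (1 / p) *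
            (∫⁻ y, (k y ^ (1 / q)) ^ q ∂μ) ^ (1 / q) :=
          ENNReal.lintegral_mul_le_Lp_mul_Lq μ hpq (hh.mul (hk.pow_const _)) (hk.pow_const _)
      _ = (∫⁻ y, h y ^ p * k y ∂μ) ^ (1 / p) * (∫⁻ y, k y ∂μ) ^ (1 / q) := by
          congr 1
          · congr 1
            apply lintegral_congr
            intro y
            rw [ENNReal.mul_rpow_of_nonneg _ _ (le_of_lt hpq.pos), ← ENNReal.rpow_mul,
              one_div_mul_cancel hpq.ne_zero, ENNReal.rpow_one]
          · congr 1
            apply lintegral_congr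
            intro y
            rw [← ENNReal.rpow_mul, one_div_mul_cancel hpq.symm.ne_zero, ENNReal.rpow_one]
      _ = (∫⁻ y, h y ^ p * k y ∂μ) ^ (1 / p) := by
          rw [hk1, ENNReal.one_rpow, mul_one]

/-- Weighted bound: a.e. `x`, `∫ |K_t(x,y) g(y)| dμ(y) ≤ (C₀ t^{-β})^{1/p} ‖g‖_p`. -/
lemma lintegral_kernel_mul_le [SFinite μ] (hK : IsHeatKernel μ K)
    (hU : Ultracontractive μ K C₀ β) (hp : 1 ≤ p) (ht : 0 < t) (hg : Measurable g) :
    ∀ᵐ x ∂μ, ∫⁻ y, (‖K t x y * g y‖₊ : ℝ≥0∞) ∂μ ≤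
      ENNReal.ofReal (C₀ * t ^ (-β)) ^ (1 / p) *
        (∫⁻ y, ENNReal.ofReal |g y| ^ p ∂μ) ^ (1 / p) := by
  have hp0 : 0 < p := lt_of_lt_of_le one_pos hp
  filter_upwards [cons_lintegral hK ht, Measure.ae_ae_of_ae_prod (hU t ht)] with x hx hxU
  have heq : ∀ y, (‖K t x y * g y‖₊ : ℝ≥0∞) =
      ENNReal.ofReal |g y| * ENNReal.ofReal (K t x y) := by
    intro y
    rw [← enorm_eq_nnnorm, Real.enorm_eq_ofReal_abs, abs_mul, abs_of_nonneg (hK.nonneg t x y),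
      ENNReal.ofReal_mul (hK.nonneg t x y), mul_comm]
  calc ∫⁻ y, (‖K t x y * g y‖₊ : ℝ≥0∞) ∂μ
      = ∫⁻ y, ENNReal.ofReal |g y| * ENNReal.ofReal (K t x y) ∂μ := lintegral_congr heq
    _ ≤ (∫⁻ y, ENNReal.ofReal |g y| ^ p * ENNReal.ofReal (K t x y) ∂μ) ^ (1 / p) :=
        lintegral_mul_kernel_le hp
          (ENNReal.measurable_ofReal.comp hg.abs).aemeasurable
          (ENNReal.measurable_ofReal.comp (hK.meas_left t x)).aemeasurable
          (fun y => ENNReal.ofReal_ne_top) hx.2.2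
    _ ≤ (ENNReal.ofReal (C₀ * t ^ (-β)) * ∫⁻ y, ENNReal.ofReal |g y| ^ p ∂μ) ^ (1 / p) := by
        apply ENNReal.rpow_le_rpow _ (by positivity)
        calc ∫⁻ y, ENNReal.ofReal |g y| ^ p * ENNReal.ofReal (K t x y) ∂μ
            ≤ ∫⁻ y, ENNReal.ofReal (C₀ * t ^ (-β)) * ENNReal.ofReal |g y| ^ p ∂μ := by
              apply lintegral_mono_ae
              filter_upwards [hxU] with y hy
              rw [mul_comm]
              exact mul_le_mul_left (ENNReal.ofReal_le_ofReal hy) _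
          _ = ENNReal.ofReal (C₀ * t ^ (-β)) * ∫⁻ y, ENNReal.ofReal |g y| ^ p ∂μ :=
              lintegral_const_mul' _ _ ENNReal.ofReal_ne_top
    _ = ENNReal.ofReal (C₀ * t ^ (-β)) ^ (1 / p) *
          (∫⁻ y, ENNReal.ofReal |g y| ^ p ∂μ) ^ (1 / p) :=
        ENNReal.mul_rpow_of_nonneg _ _ (by positivity)

/-- a.e. `x`, `y ↦ K_t(x,y) g(y)` is integrable. -/
lemma kernel_mul_integrable [SFinite μ] (hK : IsHeatKernel μ K) (hU : Ultracontractive μ K C₀ β)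
    (hp : 1 ≤ p) (ht : 0 < t) (hg : Measurable g)
    (hΛ : ∫⁻ y, ENNReal.ofReal |g y| ^ p ∂μ ≠ ∞) :
    ∀ᵐ x ∂μ, Integrable (fun y => K t x y * g y) μ := by
  filter_upwards [lintegral_kernel_mul_le hK hU hp ht hg] with x hx
  refine ⟨((hK.meas_left t x).mul hg).aestronglyMeasurable, ?_⟩
  refine lt_of_le_of_lt hx ?_
  exact ENNReal.mul_lt_top
    (ENNReal.rpow_lt_top_of_nonneg (by positivity) ENNReal.ofReal_ne_top)
    (ENNReal.rpow_lt_top_of_nonneg (by positivity) hΛ)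

/-- a.e. `x`, `|P_t g(x)| ≤ (C₀ t^{-β})^{1/p} ‖g‖_p`. -/
lemma heatOp_enorm_le [SFinite μ] (hK : IsHeatKernel μ K) (hU : Ultracontractive μ K C₀ β)
    (hp : 1 ≤ p) (ht : 0 < t) (hg : Measurable g) :
    ∀ᵐ x ∂μ, ENNReal.ofReal |heatOp μ K t g x| ≤
      ENNReal.ofReal (C₀ * t ^ (-β)) ^ (1 / p) *
        (∫⁻ y, ENNReal.ofReal |g y| ^ p ∂μ) ^ (1 / p) := by
  filter_upwards [lintegral_kernel_mul_le hK hU hp ht hg] with x hx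
  refine le_trans ?_ hx
  rw [← Real.enorm_eq_ofReal_abs]
  exact enorm_integral_le_lintegral_enorm _

lemma heatOp_stronglyMeasurable [SFinite μ] (hK : IsHeatKernel μ K) (hg : Measurable g)
    (t : ℝ) : StronglyMeasurable (heatOp μ K t g) := by
  apply MeasureTheory.StronglyMeasurable.integral_prod_right (f := fun x y => K t x y * g y)
  exact ((hK.measurable t).mul (hg.comp measurable_snd)).stronglyMeasurable

lemma heatOp_sub {x : X} {g₁ g₂ : X → ℝ}
    (h₁ : Integrable (fun y => K t x y * g₁ y) μ)
    (h₂ : Integrable (fun y => K t x y * g₂ y) μ) :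
    heatOp μ K t (fun y => g₁ y - g₂ y) x = heatOp μ K t g₁ x - heatOp μ K t g₂ x := by
  unfold heatOp
  simp_rw [mul_sub]
  exact integral_sub h₁ h₂

/-- `L^p` contraction: `∫ |P_t g|^p ≤ ∫ |g|^p`. -/
lemma lintegral_heatOp_rpow_le [SFinite μ] (hK : IsHeatKernel μ K) (hp : 1 ≤ p)
    (ht : 0 < t) (hg : Measurable g) :
    ∫⁻ x, ENNReal.ofReal |heatOp μ K t g x| ^ p ∂μ ≤ ∫⁻ y, ENNReal.ofReal |g y| ^ p ∂μ := by
  have hp0 : 0 < p := lt_of_lt_of_le one_pos hp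
  have step1 : ∀ᵐ x ∂μ, ENNReal.ofReal |heatOp μ K t g x| ^ p ≤
      ∫⁻ y, ENNReal.ofReal |g y| ^ p * ENNReal.ofReal (K t x y) ∂μ := by
    filter_upwards [cons_lintegral hK ht] with x hx
    have h1 : ENNReal.ofReal |heatOp μ K t g x| ≤
        ∫⁻ y, ENNReal.ofReal |g y| * ENNReal.ofReal (K t x y) ∂μ := by
      rw [← Real.enorm_eq_ofReal_abs]
      refine le_trans (enorm_integral_le_lintegral_enorm _)
        (le_of_eq (lintegral_congr fun y => ?_))
      rw [Real.enorm_eq_ofReal_abs, abs_mul, abs_of_nonneg (hK.nonneg t x y),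
        ENNReal.ofReal_mul (hK.nonneg t x y), mul_comm]
    have h2 := lintegral_mul_kernel_le hp
      (ENNReal.measurable_ofReal.comp hg.abs).aemeasurable
      (ENNReal.measurable_ofReal.comp (hK.meas_left t x)).aemeasurable
      (fun y => ENNReal.ofReal_ne_top) hx.2.2
    have h3 := ENNReal.rpow_le_rpow (h1.trans h2) (le_of_lt hp0)
    rwa [← ENNReal.rpow_mul, one_div_mul_cancel (ne_of_gt hp0), ENNReal.rpow_one] at h3
  calc ∫⁻ x, ENNReal.ofReal |heatOp μ K t g x| ^ p ∂μ
      ≤ ∫⁻ x, ∫⁻ y, ENNReal.ofReal |g y| ^ p * ENNReal.ofReal (K t x y) ∂μ ∂μ :=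
        lintegral_mono_ae step1
    _ = ∫⁻ y, ∫⁻ x, ENNReal.ofReal |g y| ^ p * ENNReal.ofReal (K t x y) ∂μ ∂μ := by
        apply lintegral_lintegral_swap
        exact ((((ENNReal.measurable_ofReal.comp hg.abs).comp measurable_snd).pow_const
          p).mul (ENNReal.measurable_ofReal.comp (hK.measurable t))).aemeasurable
    _ = ∫⁻ y, ENNReal.ofReal |g y| ^ p * ∫⁻ x, ENNReal.ofReal (K t x y) ∂μ ∂μ := by
        refine lintegral_congr fun y => ?_
        exact lintegral_const_mul' _ _
          (ENNReal.rpow_ne_top_of_nonneg (le_of_lt hp0) ENNReal.ofReal_ne_top)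
    _ = ∫⁻ y, ENNReal.ofReal |g y| ^ p ∂μ := by
        apply lintegral_congr_ae
        filter_upwards [cons_lintegral_right hK ht] with y hy
        rw [hy, mul_one]

/-- `‖g - P_t g‖_p^p ≤ besovEnergy`. -/
lemma lintegral_sub_heatOp_le [SFinite μ] (hK : IsHeatKernel μ K)
    (hU : Ultracontractive μ K C₀ β) (hp : 1 ≤ p) (ht : 0 < t) (hg : Measurable g)
    (hΛ : ∫⁻ y, ENNReal.ofReal |g y| ^ p ∂μ ≠ ∞) :
    ∫⁻ x, ENNReal.ofReal |g x - heatOp μ K t g x| ^ p ∂μ ≤ besovEnergy μ K p t g := by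
  have hp0 : 0 < p := lt_of_lt_of_le one_pos hp
  have key : ∀ᵐ x ∂μ, ENNReal.ofReal |g x - heatOp μ K t g x| ^ p ≤
      ∫⁻ y, ENNReal.ofReal (|g x - g y| ^ p) * ENNReal.ofReal (K t x y) ∂μ := by
    filter_upwards [cons_lintegral hK ht, kernel_mul_integrable hK hU hp ht hg hΛ]
      with x hx hxi
    have hrepr : g x - heatOp μ K t g x = ∫ y, (g x - g y) * K t x y ∂μ := by
      have h1 : ∫ y, g x * K t x y ∂μ = g x := by
        rw [integral_const_mul, hx.2.1, mul_one]
      have h2 : Integrable (fun y => g x * K t x y) μ := hx.1.const_mul _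
      have h3 : Integrable (fun y => g y * K t x y) μ := by
        have := hxi
        simpa [mul_comm] using this
      rw [show (fun y => (g x - g y) * K t x y) = fun y => g x * K t x y - g y * K t x y by
        funext y; ring, integral_sub h2 h3, h1]
      congr 1
      unfold heatOp
      exact integral_congr_ae (ae_of_all _ fun y => mul_comm _ _)
    have h4 : ENNReal.ofReal |g x - heatOp μ K t g x| ≤
        ∫⁻ y, ENNReal.ofReal |g x - g y| * ENNReal.ofReal (K t x y) ∂μ := by
      rw [hrepr, ← Real.enorm_eq_ofReal_abs]
      refine le_trans (enorm_integral_le_lintegral_enorm _)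
        (le_of_eq (lintegral_congr fun y => ?_))
      rw [Real.enorm_eq_ofReal_abs, abs_mul, abs_of_nonneg (hK.nonneg t x y),
        ENNReal.ofReal_mul (abs_nonneg _)]
    have h5 := lintegral_mul_kernel_le (h := fun y => ENNReal.ofReal |g x - g y|) hp
      ((ENNReal.measurable_ofReal.comp ((measurable_const.sub hg).abs))).aemeasurable
      (ENNReal.measurable_ofReal.comp (hK.meas_left t x)).aemeasurable
      (fun y => ENNReal.ofReal_ne_top) hx.2.2
    have h6 := ENNReal.rpow_le_rpow (h4.trans h5) (le_of_lt hp0)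
    rw [← ENNReal.rpow_mul, one_div_mul_cancel (ne_of_gt hp0), ENNReal.rpow_one] at h6
    refine le_trans h6 (le_of_eq (lintegral_congr fun y => ?_))
    rw [ENNReal.ofReal_rpow_of_nonneg (abs_nonneg _) (le_of_lt hp0)]
    rfl
  exact lintegral_mono_ae key

/-- The Besov energy is controlled by the seminorm. -/
lemma energy_rpow_le (ht : 0 < t) :
    besovEnergy μ K p t g ^ (1 / p) ≤
      ENNReal.ofReal (t ^ α) * besovSeminorm μ K p α g := by
  have h : ENNReal.ofReal (t ^ (-α)) * besovEnergy μ K p t g ^ (1 / p) ≤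
      besovSeminorm μ K p α g :=
    le_iSup₂ (f := fun (t : ℝ) (_ : 0 < t) =>
      ENNReal.ofReal (t ^ (-α)) * besovEnergy μ K p t g ^ (1 / p)) t ht
  calc besovEnergy μ K p t g ^ (1 / p)
      = ENNReal.ofReal (t ^ α) *
          (ENNReal.ofReal (t ^ (-α)) * besovEnergy μ K p t g ^ (1 / p)) := by
        rw [← mul_assoc, ← ENNReal.ofReal_mul (by positivity), ← Real.rpow_add ht,
          add_neg_cancel, Real.rpow_zero, ENNReal.ofReal_one, one_mul]
    _ ≤ ENNReal.ofReal (t ^ α) * besovSeminorm μ K p α g := mul_le_mul_right h _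

lemma sub_norm_le [SFinite μ] (hK : IsHeatKernel μ K)
    (hU : Ultracontractive μ K C₀ β) (hp : 1 ≤ p) (ht : 0 < t) (hg : Measurable g)
    (hΛ : ∫⁻ y, ENNReal.ofReal |g y| ^ p ∂μ ≠ ∞) :
    (∫⁻ x, ENNReal.ofReal |g x - heatOp μ K t g x| ^ p ∂μ) ^ (1 / p) ≤
      ENNReal.ofReal (t ^ α) * besovSeminorm μ K p α g :=
  le_trans (ENNReal.rpow_le_rpow (lintegral_sub_heatOp_le hK hU hp ht hg hΛ)
    (by positivity)) (energy_rpow_le ht)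

lemma besovSeminorm_congr (hfg : f =ᵐ[μ] g) :
    besovSeminorm μ K p α f = besovSeminorm μ K p α g := by
  unfold besovSeminorm besovEnergy
  congr 1
  funext t
  congr 1
  funext ht
  congr 2
  apply lintegral_congr_ae
  filter_upwards [hfg] with x hx
  apply lintegral_congr_ae
  filter_upwards [hfg] with y hy
  rw [hx, hy]

lemma lintegral_abs_rpow_ne_top (hp : 1 ≤ p) (hf : MemLp f (ENNReal.ofReal p) μ) :
    ∫⁻ y, ENNReal.ofReal |f y| ^ p ∂μ ≠ ∞ := by
  have hp0 : 0 < p := lt_of_lt_of_le one_pos hp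
  have h := hf.2
  rw [eLpNorm_eq_lintegral_rpow_enorm_toReal (by simp [ENNReal.ofReal_eq_zero]; linarith)
    (by simp), ENNReal.toReal_ofReal hp0.le] at h
  intro hcontra
  have heq : ∫⁻ y, ‖f y‖ₑ ^ p ∂μ = ∫⁻ y, ENNReal.ofReal |f y| ^ p ∂μ :=
    lintegral_congr fun y => by rw [Real.enorm_eq_ofReal_abs]
  rw [heq, hcontra, ENNReal.top_rpow_of_pos (by positivity)] at h
  exact (lt_irrefl _ h).elim

lemma IsHeatKernel.meas_right (hK : IsHeatKernel μ K) (t : ℝ) (y : X) :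
    Measurable fun x => K t x y :=
  (hK.measurable t).comp measurable_prodMk_right

/-- Semigroup identity for the heat operator. -/
lemma heatOp_comp [SFinite μ] (hK : IsHeatKernel μ K) (hU : Ultracontractive μ K C₀ β)
    (hp : 1 ≤ p) (hs : 0 < s) (ht : 0 < t) (hg : Measurable g)
    (hΛ : ∫⁻ y, ENNReal.ofReal |g y| ^ p ∂μ ≠ ∞) :
    ∀ᵐ x ∂μ, heatOp μ K (t + s) g x = heatOp μ K t (heatOp μ K s g) x := by
  have hts : 0 < t + s := by linarith
  have h3 : ∀ᵐ y ∂μ, Integrable (fun z => K s z y) μ := by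
    filter_upwards [cons_lintegral hK hs] with y hy
    have heq : (fun z => K s z y) = fun z => K s y z := by funext z; rw [hK.symm s z y]
    rw [heq]; exact hy.1
  filter_upwards [Measure.ae_ae_of_ae_prod (hK.semigroup s t hs ht),
    Measure.ae_ae_of_ae_prod (hU t ht),
    lintegral_kernel_mul_le hK hU hp hts hg] with x h1x h2x h4x
  have hsg : ∀ᵐ y ∂μ, ∫⁻ z, ENNReal.ofReal (K t x z) * ENNReal.ofReal (K s z y) ∂μ =
      ENNReal.ofReal (K (t + s) x y) := by
    filter_upwards [h1x, h3] with y hy hyint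
    have hint : Integrable (fun z => K t x z * K s z y) μ := by
      apply Integrable.mono' (hyint.const_mul (C₀ * t ^ (-β)))
        (((hK.meas_left t x).mul (hK.meas_right s y)).aestronglyMeasurable)
      filter_upwards [h2x] with z hz
      rw [Real.norm_eq_abs, Pi.mul_apply, abs_mul, abs_of_nonneg (hK.nonneg t x z),
        abs_of_nonneg (hK.nonneg s z y)]
      exact mul_le_mul_of_nonneg_right hz (hK.nonneg s z y)
    calc ∫⁻ z, ENNReal.ofReal (K t x z) * ENNReal.ofReal (K s z y) ∂μ
        = ∫⁻ z, ENNReal.ofReal (K t x z * K s z y) ∂μ :=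
          lintegral_congr fun z => (ENNReal.ofReal_mul (hK.nonneg t x z)).symm
      _ = ENNReal.ofReal (∫ z, K t x z * K s z y ∂μ) :=
          (ofReal_integral_eq_lintegral_ofReal hint
            (ae_of_all _ fun z => mul_nonneg (hK.nonneg t x z) (hK.nonneg s z y))).symm
      _ = ENNReal.ofReal (K (t + s) x y) := by rw [hy]
  have hmeas : Measurable (Function.uncurry fun y z => K t x z * K s z y * g y) :=
    (((hK.meas_left t x).comp measurable_snd).mul
      ((hK.measurable s).comp measurable_swap)).mul (hg.comp measurable_fst)
  have hprod : Integrable (Function.uncurry fun y z => K t x z * K s z y * g y)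
      (μ.prod μ) := by
    refine ⟨hmeas.aestronglyMeasurable, ?_⟩
    show (∫⁻ yz, (‖(Function.uncurry fun y z => K t x z * K s z y * g y) yz‖₊ : ℝ≥0∞)
      ∂(μ.prod μ)) < ⊤
    calc ∫⁻ yz, (‖(Function.uncurry fun y z => K t x z * K s z y * g y) yz‖₊ : ℝ≥0∞)
          ∂(μ.prod μ)
        = ∫⁻ y, ∫⁻ z, (‖K t x z * K s z y * g y‖₊ : ℝ≥0∞) ∂μ ∂μ := by
          exact lintegral_prod _ hmeas.enorm.aemeasurable
      _ = ∫⁻ y, (∫⁻ z, ENNReal.ofReal (K t x z) * ENNReal.ofReal (K s z y) ∂μ) *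
            ENNReal.ofReal |g y| ∂μ := by
          refine lintegral_congr fun y => ?_
          rw [← lintegral_mul_const' _ _ ENNReal.ofReal_ne_top]
          refine lintegral_congr fun z => ?_
          rw [← enorm_eq_nnnorm, Real.enorm_eq_ofReal_abs, abs_mul, abs_mul,
            abs_of_nonneg (hK.nonneg t x z), abs_of_nonneg (hK.nonneg s z y),
            ENNReal.ofReal_mul (mul_nonneg (hK.nonneg t x z) (hK.nonneg s z y)),
            ENNReal.ofReal_mul (hK.nonneg t x z)]
      _ = ∫⁻ y, ENNReal.ofReal (K (t + s) x y) * ENNReal.ofReal |g y| ∂μ := by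
          refine lintegral_congr_ae ?_
          filter_upwards [hsg] with y hy
          rw [hy]
      _ = ∫⁻ y, (‖K (t + s) x y * g y‖₊ : ℝ≥0∞) ∂μ := by
          refine lintegral_congr fun y => ?_
          rw [← enorm_eq_nnnorm, Real.enorm_eq_ofReal_abs, abs_mul, abs_of_nonneg (hK.nonneg _ x y),
            ENNReal.ofReal_mul (hK.nonneg _ x y)]
      _ < ⊤ := lt_of_le_of_lt h4x (ENNReal.mul_lt_top
          (ENNReal.rpow_lt_top_of_nonneg (by positivity) ENNReal.ofReal_ne_top)
          (ENNReal.rpow_lt_top_of_nonneg (by positivity) hΛ))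
  calc heatOp μ K (t + s) g x
      = ∫ y, (∫ z, K t x z * K s z y ∂μ) * g y ∂μ := by
        unfold heatOp
        refine integral_congr_ae ?_
        filter_upwards [h1x] with y hy
        rw [hy]
    _ = ∫ y, ∫ z, K t x z * K s z y * g y ∂μ ∂μ := by
        refine integral_congr_ae (ae_of_all _ fun y => ?_)
        exact (integral_mul_const _ _).symm
    _ = ∫ z, ∫ y, K t x z * K s z y * g y ∂μ ∂μ := integral_integral_swap hprod
    _ = ∫ z, K t x z * heatOp μ K s g z ∂μ := by
        refine integral_congr_ae (ae_of_all _ fun z => ?_)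
        simp_rw [mul_assoc]
        rw [integral_const_mul]
        rfl
    _ = heatOp μ K t (heatOp μ K s g) x := rfl

lemma real_log_eq {u v : ℝ} (hu : 0 < u) (hv : 0 < v) (h : Real.log u = Real.log v) :
    u = v := by
  rw [← Real.exp_log hu, h, Real.exp_log hv]

lemma real_geom (hC₀ : 0 < C₀) (hp0 : 0 < p) (ht : 0 < t) (a : ℝ) (n : ℕ) :
    (C₀ * ((2:ℝ) ^ n * t) ^ (-β)) ^ (1 / p) * ((2:ℝ) ^ n * t) ^ a =
      C₀ ^ (1 / p) * t ^ (a - β / p) * ((2:ℝ) ^ (a - β / p)) ^ n := by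
  have h2 : (0:ℝ) < 2 ^ n := by positivity
  have hu : (0:ℝ) < 2 ^ n * t := by positivity
  have hbase : (0:ℝ) < C₀ * ((2:ℝ) ^ n * t) ^ (-β) :=
    mul_pos hC₀ (Real.rpow_pos_of_pos hu _)
  apply real_log_eq (by positivity) (by positivity)
  rw [Real.log_mul (ne_of_gt (Real.rpow_pos_of_pos hbase _))
      (ne_of_gt (Real.rpow_pos_of_pos hu _)),
    Real.log_rpow hbase, Real.log_rpow hu,
    Real.log_mul (ne_of_gt hC₀) (ne_of_gt (Real.rpow_pos_of_pos hu _)),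
    Real.log_rpow hu,
    Real.log_mul (ne_of_gt h2) (ne_of_gt ht), Real.log_pow,
    Real.log_mul (by positivity) (ne_of_gt (pow_pos (Real.rpow_pos_of_pos two_pos _) n)),
    Real.log_mul (ne_of_gt (Real.rpow_pos_of_pos hC₀ _)) (ne_of_gt (Real.rpow_pos_of_pos ht _)),
    Real.log_rpow hC₀, Real.log_rpow ht, Real.log_pow, Real.log_rpow two_pos]
  field_simp
  ring

/-- The key sup-norm bound on the heat semigroup via the Besov seminorm. -/
lemma heatOp_ae_bound [SFinite μ] (hK : IsHeatKernel μ K) (hU : Ultracontractive μ K C₀ β)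
    (hp : 1 ≤ p) (hC₀ : 0 < C₀) (hα : 0 < α) (hneg : α - β / p < 0)
    (hg : Measurable g) (hΛ : ∫⁻ y, ENNReal.ofReal |g y| ^ p ∂μ ≠ ∞)
    (ht : 0 < t) :
    ∀ᵐ x ∂μ, ENNReal.ofReal |heatOp μ K t g x| ≤
      ENNReal.ofReal (C₀ ^ (1 / p) * (1 - (2:ℝ) ^ (α - β / p))⁻¹ * t ^ (α - β / p)) *
        besovSeminorm μ K p α g := by
  have hp0 : 0 < p := lt_of_lt_of_le one_pos hp
  set N := besovSeminorm μ K p α g with hNdef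
  set e := α - β / p with hedef
  set rr := (2:ℝ) ^ e with hrrdef
  have hrr0 : 0 < rr := Real.rpow_pos_of_pos two_pos _
  have hrr1 : rr < 1 := Real.rpow_lt_one_of_one_lt_of_neg one_lt_two hneg
  set sn := fun n : ℕ => (2:ℝ) ^ n * t with hsndef
  have hsn : ∀ n, 0 < sn n := fun n => by simp only [hsndef]; positivity
  have hsn2 : ∀ n, sn (n + 1) = sn n + sn n := by
    intro n; simp only [hsndef, pow_succ]; ring
  have hΛP : ∀ n, ∫⁻ y, ENNReal.ofReal |heatOp μ K (sn n) g y| ^ p ∂μ ≠ ∞ := fun n =>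
    ne_top_of_le_ne_top hΛ (lintegral_heatOp_rpow_le hK hp (hsn n) hg)
  have hA : ∀ᵐ x ∂μ, ∀ n : ℕ, heatOp μ K (sn (n + 1)) g x =
      heatOp μ K (sn n) (heatOp μ K (sn n) g) x := by
    rw [MeasureTheory.ae_all_iff]
    intro n
    have h := heatOp_comp hK hU hp (hsn n) (hsn n) hg hΛ
    rw [← hsn2 n] at h
    exact h
  have hI1 : ∀ᵐ x ∂μ, ∀ n : ℕ, Integrable (fun y => K (sn n) x y * g y) μ := by
    rw [MeasureTheory.ae_all_iff]
    exact fun n => kernel_mul_integrable hK hU hp (hsn n) hg hΛ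
  have hI2 : ∀ᵐ x ∂μ, ∀ n : ℕ,
      Integrable (fun y => K (sn n) x y * heatOp μ K (sn n) g y) μ := by
    rw [MeasureTheory.ae_all_iff]
    exact fun n => kernel_mul_integrable hK hU hp (hsn n)
      (heatOp_stronglyMeasurable hK hg (sn n)).measurable (hΛP n)
  have hB : ∀ᵐ x ∂μ, ∀ n : ℕ, ENNReal.ofReal
      |heatOp μ K (sn n) (fun y => g y - heatOp μ K (sn n) g y) x| ≤
      ENNReal.ofReal (C₀ ^ (1 / p) * t ^ e * rr ^ n) * N := by
    rw [MeasureTheory.ae_all_iff]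
    intro n
    have hmeas' : Measurable fun y => g y - heatOp μ K (sn n) g y :=
      hg.sub (heatOp_stronglyMeasurable hK hg (sn n)).measurable
    filter_upwards [heatOp_enorm_le hK hU hp (hsn n) hmeas'] with x hx
    refine le_trans hx ?_
    have hb2 : (∫⁻ y, ENNReal.ofReal |g y - heatOp μ K (sn n) g y| ^ p ∂μ) ^ (1 / p) ≤
        ENNReal.ofReal (sn n ^ α) * N := sub_norm_le hK hU hp (hsn n) hg hΛ
    refine le_trans (mul_le_mul_right hb2 _) (le_of_eq ?_)
    rw [ENNReal.ofReal_rpow_of_nonneg (le_of_lt (mul_pos hC₀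
        (Real.rpow_pos_of_pos (hsn n) _))) (by positivity),
      ← mul_assoc, ← ENNReal.ofReal_mul (by positivity)]
    congr 2
    have hg2 := real_geom (β := β) hC₀ hp0 ht α n
    simp only [hsndef]
    rw [hg2]
  have hC : ∀ᵐ x ∂μ, ∀ n : ℕ, ENNReal.ofReal |heatOp μ K (sn n) g x| ≤
      ENNReal.ofReal (C₀ ^ (1 / p) * t ^ (0 - β / p) * ((2:ℝ) ^ (0 - β / p)) ^ n) *
        (∫⁻ y, ENNReal.ofReal |g y| ^ p ∂μ) ^ (1 / p) := by
    rw [MeasureTheory.ae_all_iff]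
    intro n
    filter_upwards [heatOp_enorm_le hK hU hp (hsn n) hg] with x hx
    refine le_trans hx ?_
    apply mul_le_mul_left
    rw [ENNReal.ofReal_rpow_of_nonneg (le_of_lt (mul_pos hC₀
      (Real.rpow_pos_of_pos (hsn n) _))) (by positivity)]
    apply ENNReal.ofReal_le_ofReal
    have hg0 := real_geom (β := β) hC₀ hp0 ht 0 n
    rw [Real.rpow_zero, mul_one] at hg0
    simp only [hsndef]
    rw [hg0]
  filter_upwards [hA, hI1, hI2, hB, hC] with x hAx hI1x hI2x hBx hCx
  set F := fun n : ℕ => heatOp μ K (sn n) g x with hFdef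
  have hdiff : ∀ n : ℕ, ENNReal.ofReal |F n - F (n + 1)| ≤
      ENNReal.ofReal (C₀ ^ (1 / p) * t ^ e * rr ^ n) * N := by
    intro n
    have hrw : F n - F (n + 1) =
        heatOp μ K (sn n) (fun y => g y - heatOp μ K (sn n) g y) x := by
      simp only [hFdef]
      rw [hAx n, heatOp_sub (hI1x n) (hI2x n)]
    rw [hrw]
    exact hBx n
  set T := ∑' n : ℕ, ENNReal.ofReal (C₀ ^ (1 / p) * t ^ e * rr ^ n) * N with hTdef
  have hm : ∀ m : ℕ, ENNReal.ofReal |F 0| ≤ T +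
      ENNReal.ofReal (C₀ ^ (1 / p) * t ^ (0 - β / p) * ((2:ℝ) ^ (0 - β / p)) ^ m) *
        (∫⁻ y, ENNReal.ofReal |g y| ^ p ∂μ) ^ (1 / p) := by
    intro m
    have habs : |F 0| ≤ (∑ n ∈ Finset.range m, |F n - F (n + 1)|) + |F m| := by
      have hsum : F 0 - F m = ∑ n ∈ Finset.range m, (F n - F (n + 1)) :=
        (Finset.sum_range_sub' F m).symm
      calc |F 0| = |(F 0 - F m) + F m| := by ring_nf
        _ ≤ |F 0 - F m| + |F m| := abs_add_le _ _
        _ ≤ _ := by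
            rw [hsum]
            exact add_le_add_left (Finset.abs_sum_le_sum_abs _ _) _
    calc ENNReal.ofReal |F 0|
        ≤ ENNReal.ofReal ((∑ n ∈ Finset.range m, |F n - F (n + 1)|) + |F m|) :=
          ENNReal.ofReal_le_ofReal habs
      _ = (∑ n ∈ Finset.range m, ENNReal.ofReal |F n - F (n + 1)|) +
            ENNReal.ofReal |F m| := by
          rw [ENNReal.ofReal_add (by positivity) (abs_nonneg _),
            ENNReal.ofReal_sum_of_nonneg (fun i _ => abs_nonneg _)]
      _ ≤ (∑ n ∈ Finset.range m, ENNReal.ofReal (C₀ ^ (1 / p) * t ^ e * rr ^ n) * N) +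
            ENNReal.ofReal (C₀ ^ (1 / p) * t ^ (0 - β / p) * ((2:ℝ) ^ (0 - β / p)) ^ m) *
              (∫⁻ y, ENNReal.ofReal |g y| ^ p ∂μ) ^ (1 / p) :=
          add_le_add (Finset.sum_le_sum fun n _ => hdiff n) (hCx m)
      _ ≤ T + _ := add_le_add_left (ENNReal.sum_le_tsum _) _
  have hlim : Tendsto (fun m : ℕ => T +
      ENNReal.ofReal (C₀ ^ (1 / p) * t ^ (0 - β / p) * ((2:ℝ) ^ (0 - β / p)) ^ m) *
        (∫⁻ y, ENNReal.ofReal |g y| ^ p ∂μ) ^ (1 / p)) atTop (nhds (T + 0)) := by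
    apply Tendsto.const_add
    have hq0 : (0:ℝ) ≤ (2:ℝ) ^ (0 - β / p) :=
      le_of_lt (Real.rpow_pos_of_pos two_pos _)
    have hq1 : (2:ℝ) ^ (0 - β / p) < 1 :=
      Real.rpow_lt_one_of_one_lt_of_neg one_lt_two (by have h := hneg; rw [hedef] at h; linarith)
    have h1 : Tendsto (fun m : ℕ => C₀ ^ (1 / p) * t ^ (0 - β / p) *
        ((2:ℝ) ^ (0 - β / p)) ^ m) atTop (nhds 0) := by
      have := (tendsto_pow_atTop_nhds_zero_of_lt_one hq0 hq1).const_mul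
        (C₀ ^ (1 / p) * t ^ (0 - β / p))
      simpa using this
    have h2 : Tendsto (fun m : ℕ => ENNReal.ofReal (C₀ ^ (1 / p) * t ^ (0 - β / p) *
        ((2:ℝ) ^ (0 - β / p)) ^ m)) atTop (nhds 0) := by
      rw [← ENNReal.ofReal_zero]
      exact (ENNReal.continuous_ofReal.tendsto 0).comp h1
    have h3 := ENNReal.Tendsto.mul_const (b := (∫⁻ y, ENNReal.ofReal |g y| ^ p ∂μ) ^ (1/p)) h2
      (Or.inr (ENNReal.rpow_ne_top_of_nonneg (by positivity) hΛ))
    rwa [zero_mul] at h3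
  have hfinal : ENNReal.ofReal |F 0| ≤ T := by
    have h := ge_of_tendsto hlim (Filter.Eventually.of_forall hm)
    simpa using h
  have hT : T = ENNReal.ofReal (C₀ ^ (1 / p) * (1 - rr)⁻¹ * t ^ e) * N := by
    rw [hTdef, ENNReal.tsum_mul_right]
    congr 1
    have hterm : ∀ n : ℕ, ENNReal.ofReal (C₀ ^ (1 / p) * t ^ e * rr ^ n) =
        ENNReal.ofReal (C₀ ^ (1 / p) * t ^ e) * ENNReal.ofReal (rr ^ n) := fun n => by
      rw [← ENNReal.ofReal_mul (by positivity)]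
    rw [tsum_congr hterm, ENNReal.tsum_mul_left,
      ← ENNReal.ofReal_tsum_of_nonneg (fun n => by positivity)
        (summable_geometric_of_lt_one hrr0.le hrr1),
      tsum_geometric_of_lt_one hrr0.le hrr1, ← ENNReal.ofReal_mul (by positivity)]
    congr 1
    ring
  have hF0 : F 0 = heatOp μ K t g x := by
    simp only [hFdef, hsndef, pow_zero, one_mul]
  rw [← hF0]
  exact le_trans hfinal (le_of_eq hT)

lemma real_const_calc {p α β c₁ Nr s : ℝ} (hp0 : 0 < p) (hα : 0 < α) (hβ : 0 < β)
    (hpα : p * α < β) (hc₁ : 0 < c₁) (hNr : 0 < Nr) (hs : 0 < s) :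
    s * ((((2 * c₁ * Nr / s) ^ (1 / (β / p - α))) ^ α * Nr) ^ p / (s / 2) ^ p) ^
        (1 / (p * β / (β - p * α))) =
      ((2:ℝ) ^ p * (2 * c₁) ^ (p * α / (β / p - α))) ^ (1 / (p * β / (β - p * α))) * Nr := by
  have hθ : 0 < β / p - α := by
    rw [sub_pos, lt_div_iff₀ hp0]
    linarith
  have hq : 0 < p * β / (β - p * α) := by
    apply div_pos (by positivity)
    linarith
  set θ := β / p - α with hθdef
  set q := p * β / (β - p * α) with hqdef
  set t := (2 * c₁ * Nr / s) ^ (1 / θ) with htdef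
  have ht : 0 < t := Real.rpow_pos_of_pos (by positivity) _
  have hlogt : Real.log t = (Real.log 2 + Real.log c₁ + Real.log Nr - Real.log s) / θ := by
    rw [htdef, Real.log_rpow (by positivity), Real.log_div (by positivity) (ne_of_gt hs),
      Real.log_mul (by positivity) (ne_of_gt hNr),
      Real.log_mul (by norm_num) (ne_of_gt hc₁)]
    ring
  have pos1 : 0 < t ^ α := Real.rpow_pos_of_pos ht α
  have pos2 : 0 < t ^ α * Nr := mul_pos pos1 hNr
  have pos3 : 0 < (t ^ α * Nr) ^ p := Real.rpow_pos_of_pos pos2 p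
  have pos4 : 0 < (s / 2 : ℝ) := by positivity
  have pos5 : 0 < (s / 2 : ℝ) ^ p := Real.rpow_pos_of_pos pos4 p
  have pos6 : 0 < (t ^ α * Nr) ^ p / (s / 2) ^ p := div_pos pos3 pos5
  have pos7 : 0 < ((t ^ α * Nr) ^ p / (s / 2) ^ p) ^ (1 / q) :=
    Real.rpow_pos_of_pos pos6 _
  have pos8 : 0 < (2:ℝ) ^ p := Real.rpow_pos_of_pos two_pos p
  have pos9 : 0 < 2 * c₁ := by positivity
  have pos10 : 0 < (2 * c₁) ^ (p * α / θ) := Real.rpow_pos_of_pos pos9 _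
  have pos11 : 0 < (2:ℝ) ^ p * (2 * c₁) ^ (p * α / θ) := mul_pos pos8 pos10
  have pos12 : 0 < ((2:ℝ) ^ p * (2 * c₁) ^ (p * α / θ)) ^ (1 / q) :=
    Real.rpow_pos_of_pos pos11 _
  have lhs_eq : Real.log (s * (((t ^ α * Nr) ^ p / (s / 2) ^ p) ^ (1 / q))) =
      Real.log s + (1 / q) * (p * (α * Real.log t + Real.log Nr) -
        p * (Real.log s - Real.log 2)) := by
    rw [Real.log_mul (ne_of_gt hs) (ne_of_gt pos7), Real.log_rpow pos6,
      Real.log_div (ne_of_gt pos3) (ne_of_gt pos5), Real.log_rpow pos2,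
      Real.log_rpow pos4, Real.log_mul (ne_of_gt pos1) (ne_of_gt hNr),
      Real.log_rpow ht, Real.log_div (ne_of_gt hs) (by norm_num)]
  have rhs_eq : Real.log (((2:ℝ) ^ p * (2 * c₁) ^ (p * α / θ)) ^ (1 / q) * Nr) =
      (1 / q) * (p * Real.log 2 + (p * α / θ) * (Real.log 2 + Real.log c₁)) +
        Real.log Nr := by
    rw [Real.log_mul (ne_of_gt pos12) (ne_of_gt hNr), Real.log_rpow pos11,
      Real.log_mul (ne_of_gt pos8) (ne_of_gt pos10), Real.log_rpow two_pos,
      Real.log_rpow pos9, Real.log_mul (by norm_num) (ne_of_gt hc₁)]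
  apply real_log_eq (by positivity) (by positivity)
  rw [lhs_eq, rhs_eq, hlogt, hqdef, hθdef]
  have h1 : β - p * α ≠ 0 := by intro h; linarith [hpα]
  field_simp
  ring

end Aux

/-- **Weak-type Sobolev inequality.** Under the ultracontractive bound, for `0 < α < β`,
`1 ≤ p < β/α` and `q = pβ/(β−pα)`, every `f ∈ B^{p,α}(X)` satisfies
`sup_{s>0} s μ({|f| ≥ s})^{1/q} ≤ C ‖f‖_{p,α}`, the constant depending only on
`p, α, β, C₀`. -/
theorem weak_sobolev (p α β C₀ : ℝ)
    (hα : 0 < α) (hαβ : α < β) (hp : 1 ≤ p) (hpβ : p < β / α) (hC₀ : 0 < C₀) :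
    ∃ C : ℝ, 0 < C ∧
      ∀ (X : Type) [MetricSpace X] [MeasurableSpace X] [BorelSpace X]
        (μ : Measure X) [SigmaFinite μ] (K : ℝ → X → X → ℝ),
        IsHeatKernel μ K → Ultracontractive μ K C₀ β →
        ∀ f : X → ℝ, MemBesov μ K p α f →
        ∀ s : ℝ, 0 < s →
          ENNReal.ofReal s * μ {x | s ≤ |f x|} ^ (1 / (p * β / (β - p * α))) ≤
            ENNReal.ofReal C * besovSeminorm μ K p α f := by
  have hp0 : 0 < p := lt_of_lt_of_le one_pos hp
  have hβ : 0 < β := lt_trans hα hαβ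
  have hpα : p * α < β := (lt_div_iff₀ hα).1 hpβ
  have hθ : 0 < β / p - α := by
    rw [sub_pos, lt_div_iff₀ hp0]; linarith
  have hneg : α - β / p < 0 := by linarith
  have hrr1 : (2:ℝ) ^ (α - β / p) < 1 :=
    Real.rpow_lt_one_of_one_lt_of_neg one_lt_two hneg
  have hrr0 : (0:ℝ) < 2 ^ (α - β / p) := Real.rpow_pos_of_pos two_pos _
  have hc₁ : 0 < C₀ ^ (1 / p) * (1 - (2:ℝ) ^ (α - β / p))⁻¹ :=
    mul_pos (Real.rpow_pos_of_pos hC₀ _) (inv_pos.2 (by linarith))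
  have hq : 0 < p * β / (β - p * α) := div_pos (by positivity) (by linarith)
  refine ⟨((2:ℝ) ^ p * (2 * (C₀ ^ (1 / p) * (1 - (2:ℝ) ^ (α - β / p))⁻¹)) ^
      (p * α / (β / p - α))) ^ (1 / (p * β / (β - p * α))),
    Real.rpow_pos_of_pos (mul_pos (Real.rpow_pos_of_pos two_pos _)
      (Real.rpow_pos_of_pos (by linarith) _)) _, ?_⟩
  intro Y _ _ _ μ _ K hK hU f hf s hs
  obtain ⟨hfLp, hfN⟩ := hf
  set g := hfLp.1.mk f with hgdef
  have hfg : f =ᵐ[μ] g := hfLp.1.ae_eq_mk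
  have hg : Measurable g := hfLp.1.stronglyMeasurable_mk.measurable
  have hgLp : MemLp g (ENNReal.ofReal p) μ := hfLp.ae_eq hfg
  have hNeq : besovSeminorm μ K p α f = besovSeminorm μ K p α g := besovSeminorm_congr hfg
  have hNfin : besovSeminorm μ K p α g ≠ ∞ := by rw [← hNeq]; exact hfN
  have hΛ : ∫⁻ y, ENNReal.ofReal |g y| ^ p ∂μ ≠ ∞ := lintegral_abs_rpow_ne_top hp hgLp
  have hsub : μ {x | s ≤ |f x|} ≤ μ {x | s ≤ |g x|} := by
    have hss : {x | s ≤ |f x|} ⊆ {x | s ≤ |g x|} ∪ {x | ¬ f x = g x} := by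
      intro x hx
      by_cases h : f x = g x
      · left; rw [Set.mem_setOf_eq, ← h]; exact hx
      · right; exact h
    calc μ {x | s ≤ |f x|} ≤ μ ({x | s ≤ |g x|} ∪ {x | ¬ f x = g x}) := measure_mono hss
      _ ≤ μ {x | s ≤ |g x|} + μ {x | ¬ f x = g x} := measure_union_le _ _
      _ = μ {x | s ≤ |g x|} := by rw [ae_iff.1 hfg, add_zero]
  rw [hNeq]
  rcases eq_or_ne (besovSeminorm μ K p α g) 0 with hN0 | hN0
  · -- the seminorm vanishes: f = 0 a.e.
    have hPmeas1 : Measurable (heatOp μ K 1 g) :=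
      (heatOp_stronglyMeasurable hK hg 1).measurable
    have hEzero : besovEnergy μ K p 1 g = 0 := by
      have h2 := energy_rpow_le (μ := μ) (K := K) (p := p) (α := α) (g := g) one_pos
      rw [hN0, mul_zero] at h2
      have h3 := le_antisymm h2 zero_le
      rcases ENNReal.rpow_eq_zero_iff.1 h3 with ⟨h4, _⟩ | ⟨_, h5⟩
      · exact h4
      · exfalso
        have h6 : (0:ℝ) < 1 / p := by positivity
        linarith
    have hdiff0 : ∀ᵐ x ∂μ, g x = heatOp μ K 1 g x := by
      have h1 : ∫⁻ x, ENNReal.ofReal |g x - heatOp μ K 1 g x| ^ p ∂μ = 0 :=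
        le_antisymm (hEzero ▸ lintegral_sub_heatOp_le hK hU hp one_pos hg hΛ) zero_le
      have h2 := (lintegral_eq_zero_iff
        ((ENNReal.measurable_ofReal.comp (hg.sub hPmeas1).abs).pow_const p)).1 h1
      filter_upwards [h2] with x hx
      simp only [Pi.zero_apply] at hx
      rcases ENNReal.rpow_eq_zero_iff.1 hx with ⟨h4, _⟩ | ⟨h5, _⟩
      · have h6 := ENNReal.ofReal_eq_zero.1 h4
        have h7 : g x - heatOp μ K 1 g x = 0 :=
          abs_eq_zero.1 (le_antisymm h6 (abs_nonneg _))
        linarith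
      · exact absurd h5 ENNReal.ofReal_ne_top
    have hP0 : ∀ᵐ x ∂μ, heatOp μ K 1 g x = 0 := by
      filter_upwards [heatOp_ae_bound hK hU hp hC₀ hα hneg hg hΛ one_pos] with x hx
      rw [hN0, mul_zero] at hx
      have h7 := ENNReal.ofReal_eq_zero.1 (le_antisymm hx zero_le)
      exact abs_eq_zero.1 (le_antisymm h7 (abs_nonneg _))
    have hg0 : ∀ᵐ x ∂μ, g x = 0 := by
      filter_upwards [hdiff0, hP0] with x h1 h2
      rw [h1, h2]
    have hμ0 : μ {x | s ≤ |g x|} = 0 := by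
      apply measure_mono_null _ (ae_iff.1 hg0)
      intro x hx h
      rw [Set.mem_setOf_eq, h, abs_zero] at hx
      linarith
    have hf0 : μ {x | s ≤ |f x|} = 0 := le_antisymm (hsub.trans_eq hμ0) zero_le
    rw [hf0, ENNReal.zero_rpow_of_pos (one_div_pos.2 hq), mul_zero]
    exact zero_le
  · -- main case
    have hNr : 0 < (besovSeminorm μ K p α g).toReal := ENNReal.toReal_pos hN0 hNfin
    set Nr := (besovSeminorm μ K p α g).toReal with hNrdef
    have hNof : ENNReal.ofReal Nr = besovSeminorm μ K p α g := ENNReal.ofReal_toReal hNfin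
    set t := (2 * (C₀ ^ (1 / p) * (1 - (2:ℝ) ^ (α - β / p))⁻¹) * Nr / s) ^
      (1 / (β / p - α)) with htdef
    have ht : 0 < t := Real.rpow_pos_of_pos (by positivity) _
    have hkey : C₀ ^ (1 / p) * (1 - (2:ℝ) ^ (α - β / p))⁻¹ * t ^ (α - β / p) * Nr
        = s / 2 := by
      have htθ : t ^ (β / p - α) =
          2 * (C₀ ^ (1 / p) * (1 - (2:ℝ) ^ (α - β / p))⁻¹) * Nr / s := by
        rw [htdef, ← Real.rpow_mul (by positivity), one_div_mul_cancel (ne_of_gt hθ),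
          Real.rpow_one]
      have hneg2 : t ^ (α - β / p) = (t ^ (β / p - α))⁻¹ := by
        rw [← Real.rpow_neg (le_of_lt ht)]
        congr 1
        ring
      rw [hneg2, htθ, inv_div]
      have hA : 0 < C₀ ^ (1 / p) * (1 - (2:ℝ) ^ (α - β / p))⁻¹ := hc₁
      generalize hAeq : C₀ ^ (1 / p) * (1 - (2:ℝ) ^ (α - β / p))⁻¹ = A at hA ⊢
      field_simp
    have hPt' : ∀ᵐ x ∂μ, |heatOp μ K t g x| ≤ s / 2 := by
      filter_upwards [heatOp_ae_bound hK hU hp hC₀ hα hneg hg hΛ ht] with x hx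
      rw [← hNof, ← ENNReal.ofReal_mul (by positivity), hkey] at hx
      exact (ENNReal.ofReal_le_ofReal_iff (by positivity)).1 hx
    have hPmeas : Measurable (heatOp μ K t g) :=
      (heatOp_stronglyMeasurable hK hg t).measurable
    have hcheb : ENNReal.ofReal ((s / 2) ^ p) * μ {x | s ≤ |g x|} ≤
        (ENNReal.ofReal (t ^ α) * besovSeminorm μ K p α g) ^ p := by
      have hsubset : μ {x | s ≤ |g x|} ≤ μ {x | ENNReal.ofReal ((s / 2) ^ p) ≤
          ENNReal.ofReal |g x - heatOp μ K t g x| ^ p} := by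
        have hE : μ {x | ¬ |heatOp μ K t g x| ≤ s / 2} = 0 := ae_iff.1 hPt'
        have hss2 : {x | s ≤ |g x|} ⊆
            {x | ENNReal.ofReal ((s / 2) ^ p) ≤
              ENNReal.ofReal |g x - heatOp μ K t g x| ^ p} ∪
            {x | ¬ |heatOp μ K t g x| ≤ s / 2} := by
          intro x hx
          by_cases h : |heatOp μ K t g x| ≤ s / 2
          · left
            have hx' : s ≤ |g x| := hx
            have h3 : |g x| ≤ |g x - heatOp μ K t g x| + |heatOp μ K t g x| := by
              calc |g x| = |(g x - heatOp μ K t g x) + heatOp μ K t g x| := by ring_nf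
                _ ≤ _ := abs_add_le _ _
            have h2 : s / 2 ≤ |g x - heatOp μ K t g x| := by linarith
            show ENNReal.ofReal ((s / 2) ^ p) ≤
              ENNReal.ofReal |g x - heatOp μ K t g x| ^ p
            rw [ENNReal.ofReal_rpow_of_nonneg (abs_nonneg _) (le_of_lt hp0)]
            exact ENNReal.ofReal_le_ofReal
              (Real.rpow_le_rpow (by positivity) h2 (le_of_lt hp0))
          · right; exact h
        calc μ {x | s ≤ |g x|}
            ≤ μ ({x | ENNReal.ofReal ((s / 2) ^ p) ≤
                ENNReal.ofReal |g x - heatOp μ K t g x| ^ p} ∪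
              {x | ¬ |heatOp μ K t g x| ≤ s / 2}) := measure_mono hss2
          _ ≤ μ {x | ENNReal.ofReal ((s / 2) ^ p) ≤
                ENNReal.ofReal |g x - heatOp μ K t g x| ^ p} +
              μ {x | ¬ |heatOp μ K t g x| ≤ s / 2} := measure_union_le _ _
          _ = μ {x | ENNReal.ofReal ((s / 2) ^ p) ≤
                ENNReal.ofReal |g x - heatOp μ K t g x| ^ p} := by rw [hE, add_zero]
      calc ENNReal.ofReal ((s / 2) ^ p) * μ {x | s ≤ |g x|}
          ≤ ENNReal.ofReal ((s / 2) ^ p) * μ {x | ENNReal.ofReal ((s / 2) ^ p) ≤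
              ENNReal.ofReal |g x - heatOp μ K t g x| ^ p} := mul_le_mul_right hsubset _
        _ ≤ ∫⁻ x, ENNReal.ofReal |g x - heatOp μ K t g x| ^ p ∂μ :=
            mul_meas_ge_le_lintegral₀
              ((ENNReal.measurable_ofReal.comp (hg.sub hPmeas).abs).pow_const p).aemeasurable _
        _ ≤ besovEnergy μ K p t g := lintegral_sub_heatOp_le hK hU hp ht hg hΛ
        _ ≤ (ENNReal.ofReal (t ^ α) * besovSeminorm μ K p α g) ^ p := by
            have h := energy_rpow_le (μ := μ) (K := K) (p := p) (α := α) (g := g) ht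
            have h2 := ENNReal.rpow_le_rpow h (le_of_lt hp0)
            rwa [← ENNReal.rpow_mul, one_div_mul_cancel (ne_of_gt hp0),
              ENNReal.rpow_one] at h2
    have hμbound : μ {x | s ≤ |g x|} ≤
        ENNReal.ofReal ((t ^ α * Nr) ^ p / (s / 2) ^ p) := by
      rw [ENNReal.ofReal_div_of_pos (Real.rpow_pos_of_pos (by positivity) _),
        ENNReal.le_div_iff_mul_le
          (Or.inl (ne_of_gt (ENNReal.ofReal_pos.2 (Real.rpow_pos_of_pos (by positivity) _))))
          (Or.inl ENNReal.ofReal_ne_top), mul_comm]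
      refine le_trans hcheb (le_of_eq ?_)
      rw [← hNof, ← ENNReal.ofReal_mul (by positivity),
        ENNReal.ofReal_rpow_of_nonneg (by positivity) (le_of_lt hp0)]
    calc ENNReal.ofReal s * μ {x | s ≤ |f x|} ^ (1 / (p * β / (β - p * α)))
        ≤ ENNReal.ofReal s *
            ENNReal.ofReal ((t ^ α * Nr) ^ p / (s / 2) ^ p) ^ (1 / (p * β / (β - p * α))) :=
          mul_le_mul_right (ENNReal.rpow_le_rpow (le_trans hsub hμbound) (by positivity)) _
      _ = ENNReal.ofReal (s *
            (((t ^ α * Nr) ^ p / (s / 2) ^ p) ^ (1 / (p * β / (β - p * α))))) := by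
          rw [ENNReal.ofReal_rpow_of_nonneg (by positivity) (by positivity),
            ← ENNReal.ofReal_mul (le_of_lt hs)]
      _ = ENNReal.ofReal (((2:ℝ) ^ p * (2 * (C₀ ^ (1 / p) *
            (1 - (2:ℝ) ^ (α - β / p))⁻¹)) ^ (p * α / (β / p - α))) ^
              (1 / (p * β / (β - p * α))) * Nr) := by
          rw [htdef, real_const_calc hp0 hα hβ hpα hc₁ hNr hs]
      _ = ENNReal.ofReal (((2:ℝ) ^ p * (2 * (C₀ ^ (1 / p) *
            (1 - (2:ℝ) ^ (α - β / p))⁻¹)) ^ (p * α / (β / p - α))) ^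
              (1 / (p * β / (β - p * α)))) * besovSeminorm μ K p α g := by
          rw [ENNReal.ofReal_mul (by positivity), hNof]


end BesovDirichlet
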